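/- Let 𝝃 : SO(3) → ℂ satisfy 𝝃(A·Z(θ)) = e^{−iθ}·𝝃(A) for all A ∈ SO(3) and θ ∈ ℝ. Then the assignment ξ(p) = A·(Re 𝝃(A), Im 𝝃(A), 0)ᵀ, for any A ∈ SO(3) with third column A₃ = p, is well defined (i.e. if A, B ∈ SO(3) satisfy A₃ = B₃, then A·(Re 𝝃(A), Im 𝝃(A), 0)ᵀ = B·(Re 𝝃(B), Im 𝝃(B), 0)ᵀ), and the resulting vector ξ(p) is orthogonal to p, so ξ is a tangent vector field on S². -/

import Mathlib

open Matrix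

/-- Rotation about the `z`-axis by angle `θ`. -/
noncomputable def Zmat (θ : ℝ) : Matrix (Fin 3) (Fin 3) ℝ :=
  !![Real.cos θ, -Real.sin θ, 0; Real.sin θ, Real.cos θ, 0; 0, 0, 1]

/-- Rotation about the `y`-axis by angle `β`. -/
noncomputable def Ymat (β : ℝ) : Matrix (Fin 3) (Fin 3) ℝ :=
  !![Real.cos β, 0, Real.sin β; 0, 1, 0; -Real.sin β, 0, Real.cos β]

/-- `A` is a member of `SO(3)`: it is orthogonal and has determinant `1`. -/
def IsSO3 (A : Matrix (Fin 3) (Fin 3) ℝ) : Prop := Aᵀ * A = 1 ∧ A.det = 1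

lemma so3_col_eq (A B : Matrix (Fin 3) (Fin 3) ℝ) (hA : IsSO3 A) (hB : IsSO3 B)
    (h : Aᵀ 2 = Bᵀ 2) : ∃ θ : ℝ, B = A * Zmat θ := by
  have hAA : A * Aᵀ = 1 := mul_eq_one_comm.mp hA.1
  set C := Aᵀ * B with hC
  have hCC : Cᵀ * C = 1 := by
    rw [hC, Matrix.transpose_mul, Matrix.transpose_transpose, Matrix.mul_assoc,
      ← Matrix.mul_assoc A, hAA, Matrix.one_mul, hB.1]
  have hcol : ∀ k, A k 2 = B k 2 := fun k => congrFun h k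
  have hc2 : ∀ j, C j 2 = (1 : Matrix (Fin 3) (Fin 3) ℝ) j 2 := by
    intro j
    rw [← hA.1]
    simp only [hC, Matrix.mul_apply, Matrix.transpose_apply]
    exact Finset.sum_congr rfl fun k _ => by rw [hcol k]
  have h2c : ∀ k, C 2 k = (1 : Matrix (Fin 3) (Fin 3) ℝ) 2 k := by
    intro k
    rw [← hB.1]
    simp only [hC, Matrix.mul_apply, Matrix.transpose_apply]
    exact Finset.sum_congr rfl fun j _ => by rw [← hcol j]
  have hdetC : C.det = 1 := by
    rw [hC, Matrix.det_mul, Matrix.det_transpose, hB.2, mul_one]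
    have := congrArg Matrix.det hA.1
    rw [Matrix.det_mul, Matrix.det_transpose, Matrix.det_one] at this
    nlinarith [this, hA.2]
  set a := C 0 0; set b := C 0 1; set c := C 1 0; set d := C 1 1
  have h20 : C 2 0 = 0 := by simpa [Matrix.one_apply] using h2c 0
  have h21 : C 2 1 = 0 := by simpa [Matrix.one_apply] using h2c 1
  have h22 : C 2 2 = 1 := by simpa [Matrix.one_apply] using h2c 2
  have h02 : C 0 2 = 0 := by simpa [Matrix.one_apply] using hc2 0
  have h12 : C 1 2 = 0 := by simpa [Matrix.one_apply] using hc2 1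
  have e00 : a^2 + c^2 = 1 := by
    have := congrFun (congrFun hCC 0) 0
    simp [Matrix.mul_apply, Fin.sum_univ_three, Matrix.one_apply, h20] at this
    nlinarith [this]
  have e01 : a*b + c*d = 0 := by
    have := congrFun (congrFun hCC 0) 1
    simp [Matrix.mul_apply, Fin.sum_univ_three, Matrix.one_apply, h20, h21] at this
    nlinarith [this]
  have edet : a*d - b*c = 1 := by
    have := hdetC
    rw [Matrix.det_fin_three] at this
    rw [h20, h21, h22, h02, h12] at this
    linear_combination this
  have hb : b = -c := by linear_combination a*e01 - c*edet - b*e00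
  have hd : d = a := by linear_combination a*edet + c*e01 - d*e00
  have ha1 : -1 ≤ a := by nlinarith [e00]
  have ha2 : a ≤ 1 := by nlinarith [e00]
  set θ := if 0 ≤ c then Real.arccos a else -Real.arccos a with hθ
  have hcos : Real.cos θ = a := by
    rw [hθ]
    by_cases hcpos : 0 ≤ c
    · rw [if_pos hcpos, Real.cos_arccos ha1 ha2]
    · rw [if_neg hcpos, Real.cos_neg, Real.cos_arccos ha1 ha2]
  have hsin : Real.sin θ = c := by
    rw [hθ]
    by_cases hcpos : 0 ≤ c
    · rw [if_pos hcpos, Real.sin_arccos, show 1 - a^2 = c^2 by nlinarith [e00],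
        Real.sqrt_sq hcpos]
    · rw [if_neg hcpos, Real.sin_neg, Real.sin_arccos,
        show 1 - a^2 = c^2 by nlinarith [e00], Real.sqrt_sq_eq_abs,
        abs_of_neg (lt_of_not_ge hcpos), neg_neg]
  refine ⟨θ, ?_⟩
  have hCZ : C = Zmat θ := by
    ext i j
    fin_cases i <;> fin_cases j <;>
      simp [Zmat, hcos, hsin, h20, h21, h22, h02, h12] <;> try first | exact hb | exact hd | rfl
  calc B = (A * Aᵀ) * B := by rw [hAA, Matrix.one_mul]
    _ = A * C := by rw [Matrix.mul_assoc]
    _ = A * Zmat θ := by rw [hCZ]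

/-- Given an equivariant function `𝝃 : SO(3) → ℂ` with `𝝃(A·Z(θ)) = e^{-iθ} 𝝃(A)`, the
assignment `ξ(p) = A·(Re 𝝃(A), Im 𝝃(A), 0)ᵀ` for `A₃ = p` is well defined, and the resulting
vector is orthogonal to `p`, so `ξ` is a tangent vector field on `S²`. -/
theorem assocFun_inverse_well_defined_tangent (xi : Matrix (Fin 3) (Fin 3) ℝ → ℂ)
    (hxi : ∀ A, IsSO3 A → ∀ θ : ℝ, xi (A * Zmat θ) = Complex.exp (-θ * Complex.I) * xi A) :
    (∀ A B, IsSO3 A → IsSO3 B → Aᵀ 2 = Bᵀ 2 →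
      A.mulVec ![(xi A).re, (xi A).im, 0] = B.mulVec ![(xi B).re, (xi B).im, 0]) ∧
    (∀ A, IsSO3 A → A.mulVec ![(xi A).re, (xi A).im, 0] ⬝ᵥ (Aᵀ 2) = 0) := by
  constructor
  · intro A B hA hB hcol
    obtain ⟨θ, hBeq⟩ := so3_col_eq A B hA hB hcol
    have hx := hxi A hA θ
    have hexp : Complex.exp (-(θ:ℂ) * Complex.I)
        = (Real.cos θ : ℂ) - (Real.sin θ : ℂ) * Complex.I := by
      rw [Complex.exp_mul_I, Complex.cos_neg, Complex.sin_neg, ← Complex.ofReal_cos,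
        ← Complex.ofReal_sin]
      ring
    rw [← hBeq, hexp] at hx
    have hre : (xi B).re = Real.cos θ * (xi A).re + Real.sin θ * (xi A).im := by
      rw [hx]
      simp [Complex.mul_re, Complex.sub_re, Complex.sub_im, Complex.mul_im,
        Complex.cos_ofReal_re, Complex.sin_ofReal_re]
      try ring
    have him : (xi B).im = Real.cos θ * (xi A).im - Real.sin θ * (xi A).re := by
      rw [hx]
      simp [Complex.mul_re, Complex.sub_re, Complex.sub_im, Complex.mul_im,
        Complex.cos_ofReal_re, Complex.sin_ofReal_re]
      try ring
    have hpy := Real.sin_sq_add_cos_sq θ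
    have key : (Zmat θ).mulVec ![(xi B).re, (xi B).im, 0] = ![(xi A).re, (xi A).im, 0] := by
      funext i
      fin_cases i
      · simp [Zmat, Matrix.mulVec, dotProduct, Fin.sum_univ_three, hre, him]
        linear_combination (xi A).re * hpy
      · simp [Zmat, Matrix.mulVec, dotProduct, Fin.sum_univ_three, hre, him]
        linear_combination (xi A).im * hpy
      · simp [Zmat, Matrix.mulVec, dotProduct, Fin.sum_univ_three]
    rw [show B *ᵥ ![(xi B).re, (xi B).im, 0] = A *ᵥ (Zmat θ *ᵥ ![(xi B).re, (xi B).im, 0]) from by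
      rw [Matrix.mulVec_mulVec, ← hBeq], key]
  · intro A hA
    have e0 := congrFun (congrFun hA.1 0) 2
    have e1 := congrFun (congrFun hA.1 1) 2
    simp [Matrix.mul_apply, Fin.sum_univ_three, Matrix.one_apply] at e0 e1
    simp [Matrix.mulVec, dotProduct, Fin.sum_univ_three, Matrix.transpose_apply]
    linear_combination (xi A).re * e0 + (xi A).im * e1
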